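/- Let c < 0. Consider the equation 1 + (θ₀/(4π))√λ = [(1 + (θ₀/(4π))√λ)(1 − cε/(4π)) + (ε²/(4π)²)√λ]·√(1+λ) for λ > 0. Then there exist C > 0 and ε₀ > 0 such that for all 0 < ε < ε₀: if θ₀ ≥ 0 the equation has no solution λ > 0; if θ₀ < 0 the equation has exactly one solution λ_ε > 0, and |λ_ε − (4π/θ₀)²| ≤ Cε. In particular, for c < 0 and ε small there are no solutions of the equation in a fixed neighborhood of λ = 0. -/

import Mathlib

private lemma no_sol_aux (A m q t s : ℝ) (hA : 0 ≤ A) (hm : 1 < m) (hq : 0 < q)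
    (ht : 0 < t) (hs : 1 < s) : A ≠ (A * m + q * t) * s := by
  intro h
  have h1 : 0 ≤ A * (m * s - 1) := mul_nonneg hA (by nlinarith)
  have h2 : 0 < q * t * s := mul_pos (mul_pos hq ht) (by linarith)
  nlinarith

set_option maxHeartbeats 1000000 in
/-- d = 3, c < 0: for small ε the negative-eigenvalue equation
`1 + (θ₀/(4π))√λ = [(1 + (θ₀/(4π))√λ)(1 − cε/(4π)) + (ε²/(4π)²)√λ]·√(1+λ)`
(λ > 0) has no solution if `θ₀ ≥ 0`, and exactly one solution if `θ₀ < 0`,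
lying within `Cε` of `(4π/θ₀)²`; in particular there is a fixed neighborhood
`(0, δ)` of `0` containing no solutions. -/
theorem isolated_eigenvalue_equation_d3 (c θ₀ : ℝ) (hc : c < 0) :
    ∃ C > (0 : ℝ), ∃ δ > (0 : ℝ), ∃ ε₀ > (0 : ℝ), ∀ ε : ℝ, 0 < ε → ε < ε₀ →
      ((0 ≤ θ₀ → ∀ lam : ℝ, 0 < lam →
        1 + θ₀ / (4 * Real.pi) * Real.sqrt lam ≠
          ((1 + θ₀ / (4 * Real.pi) * Real.sqrt lam) * (1 - c * ε / (4 * Real.pi)) +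
            ε ^ 2 / (4 * Real.pi) ^ 2 * Real.sqrt lam) * Real.sqrt (1 + lam)) ∧
      (θ₀ < 0 →
        (∃! lam : ℝ, 0 < lam ∧
          1 + θ₀ / (4 * Real.pi) * Real.sqrt lam =
            ((1 + θ₀ / (4 * Real.pi) * Real.sqrt lam) * (1 - c * ε / (4 * Real.pi)) +
              ε ^ 2 / (4 * Real.pi) ^ 2 * Real.sqrt lam) * Real.sqrt (1 + lam)) ∧
        (∀ lam : ℝ, 0 < lam →
          1 + θ₀ / (4 * Real.pi) * Real.sqrt lam =
            ((1 + θ₀ / (4 * Real.pi) * Real.sqrt lam) * (1 - c * ε / (4 * Real.pi)) +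
              ε ^ 2 / (4 * Real.pi) ^ 2 * Real.sqrt lam) * Real.sqrt (1 + lam) →
          |lam - (4 * Real.pi / θ₀) ^ 2| ≤ C * ε)) ∧
      (∀ lam : ℝ, 0 < lam → lam < δ →
        1 + θ₀ / (4 * Real.pi) * Real.sqrt lam ≠
          ((1 + θ₀ / (4 * Real.pi) * Real.sqrt lam) * (1 - c * ε / (4 * Real.pi)) +
            ε ^ 2 / (4 * Real.pi) ^ 2 * Real.sqrt lam) * Real.sqrt (1 + lam))) := by
  have hπ : 0 < Real.pi := Real.pi_pos
  have hπ4 : 0 < 4 * Real.pi := by linarith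
  have hmfact : ∀ ε : ℝ, 0 < ε → 1 < 1 - c * ε / (4 * Real.pi) := by
    intro ε hε
    have h1 : c * ε < 0 := mul_neg_of_neg_of_pos hc hε
    have h2 : c * ε / (4 * Real.pi) < 0 := div_neg_of_neg_of_pos h1 hπ4
    linarith
  rcases lt_or_ge θ₀ 0 with hθ | hθ
  · -- θ₀ < 0
    set a := θ₀ / (4 * Real.pi) with ha_def
    have ha : a < 0 := div_neg_of_neg_of_pos hθ hπ4
    have ha0 : a ≠ 0 := ne_of_lt ha
    have hna : 0 < -a := neg_pos.mpr ha
    set tS : ℝ := -(1 / a) with htS_def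
    have htS : 0 < tS := by
      have h1 : 1 / a < 0 := one_div_neg.mpr ha
      simp only [htS_def]
      linarith only [h1]
    have hats : a * tS = -1 := by
      rw [htS_def]
      field_simp
    have htS2 : tS ^ 2 = (4 * Real.pi / θ₀) ^ 2 := by
      have h1 : tS = -(4 * Real.pi / θ₀) := by
        rw [htS_def, ha_def, one_div_div]
      rw [h1, neg_sq]
    set sS : ℝ := Real.sqrt (1 + tS ^ 2) with hsS_def
    have hsS2 : sS ^ 2 = 1 + tS ^ 2 := Real.sq_sqrt (by positivity)
    have hsS1 : 1 < sS := by
      have h : Real.sqrt 1 < Real.sqrt (1 + tS ^ 2) :=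
        Real.sqrt_lt_sqrt (by norm_num) (by linarith only [pow_pos htS 2])
      simpa using h
    have hsS0 : 0 < sS := by linarith only [hsS1]
    set d : ℝ := sS - 1 with hd_def
    have hd : 0 < d := by simp only [hd_def]; linarith only [hsS1]
    set T : ℝ := tS + 1 with hT_def
    have hT0 : 0 < T := by simp only [hT_def]; linarith only [htS]
    have hTtS : T = tS + 1 := hT_def
    set S : ℝ := Real.sqrt (1 + T ^ 2) with hS_def
    have hS2 : S ^ 2 = 1 + T ^ 2 := Real.sq_sqrt (by positivity)
    have hS0 : 0 < S := Real.sqrt_pos.mpr (by positivity)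
    have hSsq : S = Real.sqrt (1 + T ^ 2) := hS_def
    set K : ℝ := S + T ^ 2 with hK_def
    have hK : 0 < K := by positivity
    have hKeq : K = S + T ^ 2 := hK_def
    set κ : ℝ := d / sS with hκ_def
    have hκ : 0 < κ := div_pos hd hsS0
    clear_value a tS sS d T S K κ
    refine ⟨2 * tS + 1, by linarith only [htS], tS ^ 2, by positivity,
      min 1 (min ((-a) * κ * (4 * Real.pi) ^ 2 / (1 + tS)) ((-a) * d * (4 * Real.pi) ^ 2 / K)),
      ?_, ?_⟩
    · have h1 : 0 < (-a) * κ * (4 * Real.pi) ^ 2 / (1 + tS) :=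
        div_pos (mul_pos (mul_pos hna hκ) (by positivity)) (by linarith only [htS])
      have h2 : 0 < (-a) * d * (4 * Real.pi) ^ 2 / K :=
        div_pos (mul_pos (mul_pos hna hd) (by positivity)) hK
      simp only [lt_min_iff]
      exact ⟨one_pos, h1, h2⟩
    intro ε hε hεlt
    have hε1 : ε < 1 := lt_of_lt_of_le hεlt (min_le_left _ _)
    have hE1 : ε * (1 + tS) < (-a) * κ * (4 * Real.pi) ^ 2 := by
      have h := lt_of_lt_of_le hεlt ((min_le_right _ _).trans (min_le_left _ _))
      rw [lt_div_iff₀ (by linarith only [htS] : (0:ℝ) < 1 + tS)] at h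
      linarith only [h]
    have hE2 : ε * K < (-a) * d * (4 * Real.pi) ^ 2 := by
      have h := lt_of_lt_of_le hεlt ((min_le_right _ _).trans (min_le_right _ _))
      rw [lt_div_iff₀ hK] at h
      linarith only [h]
    set m : ℝ := 1 - c * ε / (4 * Real.pi) with hm_def
    have hm1 : 1 < m := hmfact ε hε
    set q : ℝ := ε ^ 2 / (4 * Real.pi) ^ 2 with hq_def
    have hq : 0 < q := by positivity
    have hqP : q * (4 * Real.pi) ^ 2 = ε ^ 2 := by
      rw [hq_def]; field_simp
    clear_value m q
    set G : ℝ → ℝ := fun t => ((1 + a * t) * m + q * t) * Real.sqrt (1 + t ^ 2) - (1 + a * t)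
      with hG_def
    -- near: 0 < t ≤ tS implies 0 < G t
    have hNear : ∀ t : ℝ, 0 < t → t ≤ tS → 0 < G t := by
      intro t ht htle
      have hA : 0 ≤ 1 + a * t := by
        have h1 := mul_le_mul_of_nonpos_left htle ha.le
        linarith only [h1, hats]
      set s : ℝ := Real.sqrt (1 + t ^ 2) with hs_def
      have hs1 : 1 ≤ s := Real.one_le_sqrt.mpr (by linarith only [sq_nonneg t])
      have hms : 0 < m * s - 1 := by
        have h1 : m * 1 ≤ m * s := mul_le_mul_of_nonneg_left hs1 (by linarith only [hm1])
        linarith only [h1, hm1]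
      have hident : G t = (1 + a * t) * (m * s - 1) + q * t * s := by
        simp only [hG_def, hs_def]; ring
      rw [hident]
      have h1 : 0 ≤ (1 + a * t) * (m * s - 1) := mul_nonneg hA hms.le
      have h2 : 0 < q * t * s := mul_pos (mul_pos hq ht) (by linarith only [hs1])
      linarith only [h1, h2]
    -- far: tS + ε ≤ t implies G t < 0
    have hFar : ∀ t : ℝ, tS + ε ≤ t → G t < 0 := by
      intro t ht
      set s : ℝ := Real.sqrt (1 + t ^ 2) with hs_def
      have hs2 : s ^ 2 = 1 + t ^ 2 := Real.sq_sqrt (by positivity)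
      have hsSs : sS ≤ s := by
        have hp : tS ^ 2 ≤ t ^ 2 := pow_le_pow_left₀ htS.le (by linarith only [ht, hε]) 2
        rw [hs_def, hsS_def]
        exact Real.sqrt_le_sqrt (by linarith only [hp])
      have hs0 : 0 < s := by linarith only [hsSs, hsS0]
      have h1at : 1 + a * t = a * (t - tS) := by rw [mul_sub, hats]; ring
      have hXneg : a * (t - tS) < 0 := mul_neg_of_neg_of_pos ha (by linarith only [ht, hε])
      have hms : κ * s ≤ m * s - 1 := by
        have hms' : 1 * s ≤ m * s := mul_le_mul_of_nonneg_right hm1.le hs0.le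
        have h1 : κ * s ≤ s - 1 := by
          rw [hκ_def, div_mul_eq_mul_div, div_le_iff₀ hsS0, hd_def]
          have hr : (s - 1) * sS - (sS - 1) * s = s - sS := by ring
          linarith only [hr, hsSs]
        linarith only [hms', h1]
      have key : q * t < (-a) * κ * (t - tS) := by
        have hP : (0:ℝ) < (4 * Real.pi) ^ 2 := by positivity
        rw [← mul_lt_mul_iff_left₀ hP]
        have h1 : ε * (1 + tS) * (t - tS) < (-a) * κ * (4 * Real.pi) ^ 2 * (t - tS) :=
          mul_lt_mul_of_pos_right hE1 (by linarith only [ht, hε])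
        have h2 : ε ^ 2 * t ≤ ε * (1 + tS) * (t - tS) := by
          linarith only [mul_nonneg hε.le (mul_nonneg
              (by linarith only [hε1] : (0:ℝ) ≤ 1 - ε)
              (by linarith only [ht, hε] : (0:ℝ) ≤ t - tS)),
            mul_nonneg hε.le (mul_nonneg htS.le
              (by linarith only [ht] : (0:ℝ) ≤ t - tS - ε))]
        calc q * t * (4 * Real.pi) ^ 2 = ε ^ 2 * t := by rw [← hqP]; ring
        _ ≤ ε * (1 + tS) * (t - tS) := h2
        _ < (-a) * κ * (4 * Real.pi) ^ 2 * (t - tS) := h1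
        _ = (-a) * κ * (t - tS) * (4 * Real.pi) ^ 2 := by ring
      have hGeq : G t = (1 + a * t) * (m * s - 1) + q * t * s := by
        simp only [hG_def, hs_def]; ring
      rw [hGeq, h1at]
      have hb : a * (t - tS) * (m * s - 1) ≤ a * (t - tS) * (κ * s) :=
        mul_le_mul_of_nonpos_left hms hXneg.le
      have hinner : a * (t - tS) * κ + q * t < 0 := by
        have h0 : (-a) * κ * (t - tS) = -(a * (t - tS) * κ) := by ring
        linarith only [key, h0]
      calc a * (t - tS) * (m * s - 1) + q * t * s
          ≤ a * (t - tS) * (κ * s) + q * t * s := by linarith only [hb]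
        _ = (a * (t - tS) * κ + q * t) * s := by ring
        _ < 0 := mul_neg_of_neg_of_pos hinner hs0
    -- q * K < (-a) * d
    have hqK : q * K < (-a) * d := by
      have hP : (0:ℝ) < (4 * Real.pi) ^ 2 := by positivity
      rw [← mul_lt_mul_iff_left₀ hP]
      have h1 : ε ^ 2 * K ≤ ε * K := by
        linarith only [mul_nonneg (mul_nonneg hε.le hK.le)
          (by linarith only [hε1] : (0:ℝ) ≤ 1 - ε)]
      calc q * K * (4 * Real.pi) ^ 2 = ε ^ 2 * K := by rw [← hqP]; ring
        _ ≤ ε * K := h1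
        _ < (-a) * d * (4 * Real.pi) ^ 2 := hE2
    -- monotone: tS ≤ t₁ < t₂ ≤ T implies G t₂ < G t₁
    have hMono : ∀ t₁ t₂ : ℝ, tS ≤ t₁ → t₁ < t₂ → t₂ ≤ T → G t₂ < G t₁ := by
      intro t₁ t₂ h1 h12 h2T
      set s₁ : ℝ := Real.sqrt (1 + t₁ ^ 2) with hs1_def
      set s₂ : ℝ := Real.sqrt (1 + t₂ ^ 2) with hs2_def
      have hs1sq : s₁ ^ 2 = 1 + t₁ ^ 2 := Real.sq_sqrt (by positivity)
      have hs2sq : s₂ ^ 2 = 1 + t₂ ^ 2 := Real.sq_sqrt (by positivity)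
      have ht10 : 0 < t₁ := lt_of_lt_of_le htS h1
      have hs11 : 1 ≤ s₁ := Real.one_le_sqrt.mpr (by linarith only [sq_nonneg t₁])
      have hs12 : s₁ ≤ s₂ := by
        have hp : t₁ ^ 2 ≤ t₂ ^ 2 := pow_le_pow_left₀ ht10.le h12.le 2
        rw [hs1_def, hs2_def]
        exact Real.sqrt_le_sqrt (by linarith only [hp])
      have hsSs2 : sS ≤ s₂ := by
        have hp : tS ^ 2 ≤ t₂ ^ 2 := pow_le_pow_left₀ htS.le (by linarith only [h1, h12]) 2
        rw [hs2_def, hsS_def]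
        exact Real.sqrt_le_sqrt (by linarith only [hp])
      have hs2S : s₂ ≤ S := by
        have hp : t₂ ^ 2 ≤ T ^ 2 := pow_le_pow_left₀ (by linarith only [ht10, h12]) h2T 2
        rw [hs2_def, hSsq]
        exact Real.sqrt_le_sqrt (by linarith only [hp])
      have h1at1 : 1 + a * t₁ ≤ 0 := by
        have hh := mul_le_mul_of_nonpos_left h1 ha.le
        linarith only [hh, hats]
      have hdiff : G t₂ - G t₁ =
          a * (t₂ - t₁) * (m * s₂ - 1) + m * (1 + a * t₁) * (s₂ - s₁)
            + q * (t₂ * s₂ - t₁ * s₁) := by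
        simp only [hG_def, hs1_def, hs2_def]; ring
      have hb1 : a * (t₂ - t₁) * (m * s₂ - 1) ≤ a * (t₂ - t₁) * d := by
        apply mul_le_mul_of_nonpos_left _
          (mul_nonpos_of_nonpos_of_nonneg ha.le (by linarith only [h12]))
        rw [hd_def]
        have hh : 1 * s₂ ≤ m * s₂ :=
          mul_le_mul_of_nonneg_right hm1.le (by linarith only [hs11, hs12])
        linarith only [hh, hsSs2]
      have hb2 : m * (1 + a * t₁) * (s₂ - s₁) ≤ 0 := by
        apply mul_nonpos_of_nonpos_of_nonneg _ (by linarith only [hs12])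
        exact mul_nonpos_of_nonneg_of_nonpos (by linarith only [hm1]) h1at1
      have hs2s1 : s₂ - s₁ ≤ T * (t₂ - t₁) := by
        have hprod : (s₂ - s₁) * (s₁ + s₂) = (t₂ + t₁) * (t₂ - t₁) := by
          linear_combination hs2sq - hs1sq
        have hsum : 2 ≤ s₁ + s₂ := by linarith only [hs11, hs12]
        have hh1 : (s₂ - s₁) * 2 ≤ (s₂ - s₁) * (s₁ + s₂) :=
          mul_le_mul_of_nonneg_left hsum (by linarith only [hs12])
        have hh2 : (t₂ + t₁) * (t₂ - t₁) ≤ 2 * T * (t₂ - t₁) :=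
          mul_le_mul_of_nonneg_right (by linarith only [h2T, h12]) (by linarith only [h12])
        linarith only [hprod, hh1, hh2]
      have hb3 : q * (t₂ * s₂ - t₁ * s₁) ≤ q * K * (t₂ - t₁) := by
        have hKb : t₂ * s₂ - t₁ * s₁ ≤ K * (t₂ - t₁) := by
          have e1 : t₂ * s₂ - t₁ * s₁ = (t₂ - t₁) * s₂ + t₁ * (s₂ - s₁) := by ring
          have e2 : (t₂ - t₁) * s₂ ≤ (t₂ - t₁) * S :=
            mul_le_mul_of_nonneg_left hs2S (by linarith only [h12])
          have e3 : t₁ * (s₂ - s₁) ≤ T * (T * (t₂ - t₁)) :=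
            mul_le_mul (by linarith only [h12, h2T]) hs2s1
              (by linarith only [hs12]) hT0.le
          have e4 : T * (T * (t₂ - t₁)) = T ^ 2 * (t₂ - t₁) := by ring
          have e5 : (S + T ^ 2) * (t₂ - t₁) = (t₂ - t₁) * S + T ^ 2 * (t₂ - t₁) := by ring
          rw [hKeq]
          linarith only [e1, e2, e3, e4, e5]
        calc q * (t₂ * s₂ - t₁ * s₁) ≤ q * (K * (t₂ - t₁)) :=
              mul_le_mul_of_nonneg_left hKb hq.le
          _ = q * K * (t₂ - t₁) := by ring
      have hfin : a * (t₂ - t₁) * d + q * K * (t₂ - t₁) < 0 := by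
        have hne : a * d + q * K < 0 := by
          have h0 : (-a) * d = -(a * d) := by ring
          linarith only [hqK, h0]
        calc a * (t₂ - t₁) * d + q * K * (t₂ - t₁) = (a * d + q * K) * (t₂ - t₁) := by ring
          _ < 0 := mul_neg_of_neg_of_pos hne (by linarith only [h12])
      linarith only [hdiff, hb1, hb2, hb3, hfin]
    -- continuity
    have hGcont : Continuous G := by
      rw [hG_def]
      have h1 : Continuous fun t : ℝ => Real.sqrt (1 + t ^ 2) :=
        Real.continuous_sqrt.comp ((continuous_const.add (continuous_pow 2)))
      have h2 : Continuous fun t : ℝ => 1 + a * t :=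
        continuous_const.add (continuous_const.mul continuous_id)
      have h3 : Continuous fun t : ℝ => (1 + a * t) * m + q * t :=
        (h2.mul continuous_const).add (continuous_const.mul continuous_id)
      exact (h3.mul h1).sub h2
    have hGtS : 0 < G tS := hNear tS htS le_rfl
    have hGtSe : G (tS + ε) < 0 := hFar (tS + ε) le_rfl
    have hroot : ∃ t₀ ∈ Set.Ioo tS (tS + ε), G t₀ = 0 := by
      have h := intermediate_value_Ioo' (le_of_lt (by linarith only [hε] : tS < tS + ε))
        hGcont.continuousOn
      have h0 : (0:ℝ) ∈ Set.Ioo (G (tS + ε)) (G tS) := ⟨hGtSe, hGtS⟩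
      obtain ⟨t₀, ht₀, hGt₀⟩ := h h0
      exact ⟨t₀, ht₀, hGt₀⟩
    obtain ⟨t₀, ⟨ht₀l, ht₀r⟩, hGt₀⟩ := hroot
    have ht₀pos : 0 < t₀ := lt_trans htS ht₀l
    -- bridge
    have hbridge : ∀ lam : ℝ, 0 < lam →
        ((1 + a * Real.sqrt lam =
          ((1 + a * Real.sqrt lam) * m + q * Real.sqrt lam) * Real.sqrt (1 + lam))
          ↔ G (Real.sqrt lam) = 0) := by
      intro lam hlam
      have h1 : Real.sqrt (1 + lam) = Real.sqrt (1 + Real.sqrt lam ^ 2) := by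
        rw [Real.sq_sqrt hlam.le]
      simp only [hG_def, h1]
      constructor
      · intro h; rw [← h]; ring
      · intro h; linarith only [h]
    have hrootloc : ∀ t : ℝ, 0 < t → G t = 0 → tS < t ∧ t < tS + ε := by
      intro t ht hGt
      constructor
      · by_contra hle
        push_neg at hle
        exact absurd hGt (ne_of_gt (hNear t ht hle))
      · by_contra hle
        push_neg at hle
        exact absurd hGt (ne_of_lt (hFar t hle))
    have hrootuniq : ∀ t : ℝ, 0 < t → G t = 0 → t = t₀ := by
      intro t ht hGt
      obtain ⟨htl, htr⟩ := hrootloc t ht hGt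
      rcases lt_trichotomy t t₀ with h | h | h
      · exfalso
        have hh := hMono t t₀ htl.le h (by rw [hTtS]; linarith only [ht₀r, hε1])
        rw [hGt, hGt₀] at hh; exact lt_irrefl 0 hh
      · exact h
      · exfalso
        have hh := hMono t₀ t ht₀l.le h (by rw [hTtS]; linarith only [htr, hε1])
        rw [hGt, hGt₀] at hh; exact lt_irrefl 0 hh
    refine ⟨?_, ?_, ?_⟩
    · intro h; exact absurd hθ (not_lt.mpr h)
    · intro _
      constructor
      · refine ⟨t₀ ^ 2, ⟨by positivity, ?_⟩, ?_⟩
        · exact (hbridge (t₀ ^ 2) (by positivity)).mpr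
            (by rw [Real.sqrt_sq ht₀pos.le]; exact hGt₀)
        · rintro lam ⟨hlam, heq⟩
          have hGl : G (Real.sqrt lam) = 0 := (hbridge lam hlam).mp heq
          have hsl : 0 < Real.sqrt lam := Real.sqrt_pos.mpr hlam
          have heqt := hrootuniq (Real.sqrt lam) hsl hGl
          calc lam = Real.sqrt lam ^ 2 := (Real.sq_sqrt hlam.le).symm
          _ = t₀ ^ 2 := by rw [heqt]
      · intro lam hlam heq
        have hGl : G (Real.sqrt lam) = 0 := (hbridge lam hlam).mp heq
        have hsl : 0 < Real.sqrt lam := Real.sqrt_pos.mpr hlam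
        obtain ⟨hl1, hl2⟩ := hrootloc (Real.sqrt lam) hsl hGl
        have hlow : tS ^ 2 < lam := by
          calc tS ^ 2 < Real.sqrt lam ^ 2 := pow_lt_pow_left₀ hl1 htS.le (by norm_num)
            _ = lam := Real.sq_sqrt hlam.le
        have hup : lam < (tS + ε) ^ 2 := by
          calc lam = Real.sqrt lam ^ 2 := (Real.sq_sqrt hlam.le).symm
            _ < (tS + ε) ^ 2 := pow_lt_pow_left₀ hl2 hsl.le (by norm_num)
        have hε2 : ε ^ 2 ≤ ε := by
          linarith only [mul_nonneg hε.le (by linarith only [hε1] : (0:ℝ) ≤ 1 - ε)]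
        have hexp : (tS + ε) ^ 2 = tS ^ 2 + 2 * tS * ε + ε ^ 2 := by ring
        have hmul : (2 * tS + 1) * ε = 2 * tS * ε + ε := by ring
        rw [← htS2, abs_le]
        constructor
        · have hpos : 0 < (2 * tS + 1) * ε :=
            mul_pos (by linarith only [htS]) hε
          linarith only [hlow, hpos]
        · linarith only [hup, hε2, hexp, hmul]
    · intro lam hlam hlamδ
      have hsl : 0 < Real.sqrt lam := Real.sqrt_pos.mpr hlam
      have hsltS : Real.sqrt lam < tS := by
        have h := Real.sqrt_lt_sqrt hlam.le hlamδ
        rwa [Real.sqrt_sq htS.le] at h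
      intro heq
      have hGl : G (Real.sqrt lam) = 0 := (hbridge lam hlam).mp heq
      exact absurd hGl (ne_of_gt (hNear (Real.sqrt lam) hsl hsltS.le))
  · -- θ₀ ≥ 0
    have key : ∀ ε : ℝ, 0 < ε → ∀ lam : ℝ, 0 < lam →
        1 + θ₀ / (4 * Real.pi) * Real.sqrt lam ≠
          ((1 + θ₀ / (4 * Real.pi) * Real.sqrt lam) * (1 - c * ε / (4 * Real.pi)) +
            ε ^ 2 / (4 * Real.pi) ^ 2 * Real.sqrt lam) * Real.sqrt (1 + lam) := by
      intro ε hε lam hlam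
      have ht : 0 < Real.sqrt lam := Real.sqrt_pos.mpr hlam
      have hs : 1 < Real.sqrt (1 + lam) := by
        have h : Real.sqrt 1 < Real.sqrt (1 + lam) :=
          Real.sqrt_lt_sqrt (by norm_num) (by linarith)
        simpa using h
      have hA : 0 ≤ 1 + θ₀ / (4 * Real.pi) * Real.sqrt lam := by
        have h1 : 0 ≤ θ₀ / (4 * Real.pi) := div_nonneg hθ hπ4.le
        have h2 := mul_nonneg h1 (Real.sqrt_nonneg lam)
        linarith
      exact no_sol_aux _ _ _ _ _ hA (hmfact ε hε) (by positivity) ht hs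
    exact ⟨1, one_pos, 1, one_pos, 1, one_pos, fun ε hε hε1 =>
      ⟨fun _ => key ε hε, fun h => absurd h (not_lt.mpr hθ), fun lam hlam _ => key ε hε lam hlam⟩⟩
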